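/- arXiv:1603.01589 — 5 statements merged into one kernel-verified Lean document; each statement's English description precedes it below -/
import Mathlib

section
/- For nonnegative integers k, i₁, i₂, i₃, the number N(k; i₁, i₂, i₃) of 0-1 fillings of a 3-row, k-column array with i_j ones in row j and no all-zero columns satisfies N(k; i₁,i₂,i₃) = C(k,i₁) · Σ_{a=0}^{i₂} C(i₁,a)·C(k−i₁, i₂−a)·C(i₁+i₂−a, k−i₃). -/
/-- The number of 0-1 fillings of an `m`-row, `k`-column array with exactly `i j` ones
in row `j` and no all-zero columns. -/
def Nfill (m k : ℕ) (i : Fin m → ℕ) : ℕ :=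
  Fintype.card {f : Fin m → Fin k → Bool //
    (∀ j : Fin m, (Finset.univ.filter fun c : Fin k => f j c = true).card = i j) ∧
    (∀ c : Fin k, ∃ j : Fin m, f j c = true)}

/-- Binomial coefficient `C(n, q)` with an integer lower argument, taken to be `0`
when `q < 0` (or, via `Nat.choose`, when `q > n`). -/
def Cz (n : ℕ) (q : ℤ) : ℕ := if 0 ≤ q then Nat.choose n q.toNat else 0

open Finset in
lemma count_supersets (k n : ℕ) (t : Finset (Fin k)) :
    (Finset.univ.filter fun C : Finset (Fin k) => C.card = n ∧ t ⊆ C).card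
      = if t.card ≤ n then (k - t.card).choose (n - t.card) else 0 := by
  split_ifs with h
  · have hc : tᶜ.card = k - t.card := by rw [Finset.card_compl, Fintype.card_fin]
    rw [← hc, ← Finset.card_powersetCard (n - t.card) tᶜ]
    apply Finset.card_nbij' (fun C => C \ t) (fun D => D ∪ t)
    · intro C hC
      simp only [mem_coe, mem_filter, mem_univ, true_and] at hC
      rw [Finset.mem_coe, Finset.mem_powersetCard]
      constructor
      · intro x hx
        simp only [Finset.mem_sdiff] at hx
        simp [hx.2]
      · rw [Finset.card_sdiff_of_subset hC.2, hC.1]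
    · intro D hD
      rw [Finset.mem_coe, Finset.mem_powersetCard] at hD
      have hdisj : Disjoint D t := by
        rw [Finset.disjoint_iff_inter_eq_empty]
        ext x; simp only [Finset.mem_inter, Finset.notMem_empty, iff_false, not_and]
        intro hx; have := hD.1 hx; simpa using this
      simp only [mem_coe, mem_filter, mem_univ, true_and]
      refine ⟨?_, Finset.subset_union_right⟩
      rw [Finset.card_union_of_disjoint hdisj, hD.2]
      omega
    · intro C hC
      simp only [mem_coe, mem_filter, mem_univ, true_and] at hC
      exact Finset.sdiff_union_of_subset hC.2
    · intro D hD
      rw [Finset.mem_coe, Finset.mem_powersetCard] at hD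
      apply Finset.union_sdiff_cancel_right
      rw [Finset.disjoint_iff_inter_eq_empty]
      ext x; simp only [Finset.mem_inter, Finset.notMem_empty, iff_false, not_and]
      intro hx; have := hD.1 hx; simpa using this
  · rw [Finset.card_eq_zero, Finset.filter_eq_empty_iff]
    intro C _
    rintro ⟨h1, h2⟩
    have := Finset.card_le_card h2
    omega

open Finset in
lemma count_inter (k i₂ a : ℕ) (ha : a ≤ i₂) (A : Finset (Fin k)) :
    (Finset.univ.filter fun B : Finset (Fin k) => B.card = i₂ ∧ (A ∩ B).card = a).card
      = A.card.choose a * (k - A.card).choose (i₂ - a) := by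
  have hc : Aᶜ.card = k - A.card := by rw [Finset.card_compl, Fintype.card_fin]
  rw [← hc, ← Finset.card_powersetCard a A, ← Finset.card_powersetCard (i₂ - a) Aᶜ,
    ← Finset.card_product]
  apply Finset.card_nbij' (fun B => (A ∩ B, B \ A)) (fun P => P.1 ∪ P.2)
  · intro B hB
    simp only [mem_coe, mem_filter, mem_univ, true_and] at hB
    rw [Finset.mem_coe, Finset.mem_product, Finset.mem_powersetCard, Finset.mem_powersetCard]
    refine ⟨⟨Finset.inter_subset_left, hB.2⟩, ?_, ?_⟩
    · intro x hx
      simp only [Finset.mem_sdiff] at hx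
      simp [hx.2]
    · show (B \ A).card = i₂ - a
      obtain ⟨hB1, hB2⟩ := hB
      have := Finset.card_inter_add_card_sdiff B A
      rw [Finset.inter_comm] at this
      omega
  · intro P hP
    rw [Finset.mem_coe, Finset.mem_product, Finset.mem_powersetCard, Finset.mem_powersetCard] at hP
    obtain ⟨⟨hP1, hP1c⟩, hP2, hP2c⟩ := hP
    have hdisj : Disjoint P.1 P.2 := by
      rw [Finset.disjoint_iff_inter_eq_empty]
      ext x
      simp only [Finset.mem_inter, Finset.notMem_empty, iff_false, not_and]
      intro hx hx2
      have := hP2 hx2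
      simp only [Finset.mem_compl] at this
      exact this (hP1 hx)
    simp only [mem_coe, mem_filter, mem_univ, true_and]
    constructor
    · rw [Finset.card_union_of_disjoint hdisj, hP1c, hP2c]; omega
    · have : A ∩ (P.1 ∪ P.2) = P.1 := by
        ext x
        simp only [Finset.mem_inter, Finset.mem_union]
        constructor
        · rintro ⟨hxA, hx1 | hx2⟩
          · exact hx1
          · exact absurd hxA (by simpa using hP2 hx2)
        · intro hx; exact ⟨hP1 hx, Or.inl hx⟩
      rw [this, hP1c]
  · intro B hB
    simp only [mem_coe, mem_filter, mem_univ, true_and] at hB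
    ext x
    simp only [Finset.mem_union, Finset.mem_inter, Finset.mem_sdiff]
    tauto
  · intro P hP
    rw [Finset.mem_coe, Finset.mem_product, Finset.mem_powersetCard, Finset.mem_powersetCard] at hP
    obtain ⟨⟨hP1, _⟩, hP2, _⟩ := hP
    have hPA : ∀ x ∈ P.2, x ∉ A := by
      intro x hx; simpa using hP2 hx
    have e1 : A ∩ (P.1 ∪ P.2) = P.1 := by
      ext x
      simp only [Finset.mem_inter, Finset.mem_union]
      constructor
      · rintro ⟨hxA, hx1 | hx2⟩
        · exact hx1
        · exact absurd hxA (hPA x hx2)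
      · intro hx; exact ⟨hP1 hx, Or.inl hx⟩
    have e2 : (P.1 ∪ P.2) \ A = P.2 := by
      ext x
      simp only [Finset.mem_sdiff, Finset.mem_union]
      constructor
      · rintro ⟨hx1 | hx2, hxA⟩
        · exact absurd (hP1 hx1) hxA
        · exact hx2
      · intro hx; exact ⟨Or.inr hx, hPA x hx⟩
    beta_reduce; rw [e1, e2]

open Finset in
lemma cz_eq (k u i₃ : ℕ) (hu : u ≤ k) :
    (if k - u ≤ i₃ then (k - (k - u)).choose (i₃ - (k - u)) else 0)
      = Cz u ((k : ℤ) - (i₃ : ℤ)) := by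
  have h1 : k - (k - u) = u := by omega
  rw [h1]
  unfold Cz
  by_cases h2 : i₃ ≤ k
  · have h3 : (0:ℤ) ≤ (k:ℤ) - i₃ := by omega
    rw [if_pos h3]
    have h4 : ((k:ℤ) - i₃).toNat = k - i₃ := by omega
    rw [h4]
    by_cases h5 : k - u ≤ i₃
    · rw [if_pos h5]
      have h6 : k - i₃ ≤ u := by omega
      have := Nat.choose_symm h6
      have h7 : u - (k - i₃) = i₃ - (k - u) := by omega
      rw [h7] at this
      exact this.symm ▸ this
    · rw [if_neg h5]
      have h6 : u < k - i₃ := by omega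
      exact (Nat.choose_eq_zero_of_lt h6).symm
  · have h3 : ¬ (0:ℤ) ≤ (k:ℤ) - i₃ := by omega
    rw [if_neg h3, if_pos (by omega : k - u ≤ i₃)]
    apply Nat.choose_eq_zero_of_lt
    omega

open Finset in
lemma stepA (k i₁ i₂ i₃ : ℕ) :
    Nfill 3 k ![i₁, i₂, i₃] =
      (Finset.univ.filter fun p : Finset (Fin k) × Finset (Fin k) × Finset (Fin k) =>
        p.1.card = i₁ ∧ p.2.1.card = i₂ ∧ p.2.2.card = i₃ ∧
          p.1 ∪ p.2.1 ∪ p.2.2 = Finset.univ).card := by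
  rw [Nfill, Fintype.card_subtype]
  apply Finset.card_nbij'
    (fun f => (Finset.univ.filter fun c => f 0 c = true,
               Finset.univ.filter fun c => f 1 c = true,
               Finset.univ.filter fun c => f 2 c = true))
    (fun p => fun r c => decide (c ∈ ![p.1, p.2.1, p.2.2] r))
  · intro f hf
    simp only [mem_coe, mem_filter, mem_univ, true_and] at hf ⊢
    obtain ⟨h1, h2⟩ := hf
    refine ⟨?_, ?_, ?_, ?_⟩
    · simpa using h1 0
    · simpa using h1 1
    · simpa using h1 2
    · ext c
      simp only [Finset.mem_union, Finset.mem_filter, Finset.mem_univ, true_and, iff_true]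
      obtain ⟨j, hj⟩ := h2 c
      fin_cases j
      · exact Or.inl (Or.inl hj)
      · exact Or.inl (Or.inr hj)
      · exact Or.inr hj
  · intro p hp
    simp only [mem_coe, mem_filter, mem_univ, true_and] at hp ⊢
    obtain ⟨h1, h2, h3, h4⟩ := hp
    constructor
    · intro j
      fin_cases j <;> simp only [decide_eq_true_eq, Finset.filter_univ_mem] <;> simp [h1, h2, h3, Finset.filter_univ_mem]
    · intro c
      have : c ∈ p.1 ∪ p.2.1 ∪ p.2.2 := h4 ▸ Finset.mem_univ c
      simp only [Finset.mem_union] at this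
      rcases this with (h | h) | h
      · exact ⟨0, decide_eq_true h⟩
      · exact ⟨1, decide_eq_true h⟩
      · exact ⟨2, decide_eq_true h⟩
  · intro f _
    funext r c
    fin_cases r <;> simp
  · intro p _
    refine Prod.ext ?_ (Prod.ext ?_ ?_)
    · ext c; simp only [decide_eq_true_eq, Finset.filter_univ_mem]; simp
    · ext c; simp only [decide_eq_true_eq, Finset.filter_univ_mem]; simp
    · ext c; simp only [decide_eq_true_eq, Finset.filter_univ_mem]; simp

open Finset in
lemma stepB (k i₁ i₂ i₃ : ℕ) :
    (Finset.univ.filter fun p : Finset (Fin k) × Finset (Fin k) × Finset (Fin k) =>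
        p.1.card = i₁ ∧ p.2.1.card = i₂ ∧ p.2.2.card = i₃ ∧
          p.1 ∪ p.2.1 ∪ p.2.2 = Finset.univ).card =
      Nat.choose k i₁ *
        ∑ a ∈ Finset.range (i₂ + 1),
          Nat.choose i₁ a * Nat.choose (k - i₁) (i₂ - a) *
            Cz (i₁ + i₂ - a) ((k : ℤ) - (i₃ : ℤ)) := by
  have hiff : ∀ (s C : Finset (Fin k)), (s ∪ C = Finset.univ) ↔ sᶜ ⊆ C := by
    intro s C
    constructor
    · intro h x hx
      have hx' : x ∈ s ∪ C := h ▸ Finset.mem_univ x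
      simp only [Finset.mem_union] at hx'
      rcases hx' with h' | h'
      · exact absurd h' (by simpa using hx)
      · exact h'
    · intro h
      ext x
      simp only [Finset.mem_union, Finset.mem_univ, iff_true]
      by_cases hx : x ∈ s
      · exact Or.inl hx
      · exact Or.inr (h (by simpa using hx))
  have key : ∀ A : Finset (Fin k), A.card = i₁ →
      (∑ B : Finset (Fin k), ∑ C : Finset (Fin k),
        if B.card = i₂ ∧ C.card = i₃ ∧ A ∪ B ∪ C = Finset.univ then 1 else 0)
      = ∑ a ∈ Finset.range (i₂ + 1),
          Nat.choose i₁ a * Nat.choose (k - i₁) (i₂ - a) *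
            Cz (i₁ + i₂ - a) ((k : ℤ) - (i₃ : ℤ)) := by
    intro A hA
    have hC : ∀ B : Finset (Fin k),
        (∑ C : Finset (Fin k), if C.card = i₃ ∧ A ∪ B ∪ C = Finset.univ then 1 else 0)
        = Cz (A ∪ B).card ((k : ℤ) - (i₃ : ℤ)) := by
      intro B
      rw [← Finset.card_filter]
      have e1 : (Finset.univ.filter fun C : Finset (Fin k) =>
            C.card = i₃ ∧ A ∪ B ∪ C = Finset.univ)
          = (Finset.univ.filter fun C : Finset (Fin k) => C.card = i₃ ∧ (A ∪ B)ᶜ ⊆ C) := by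
        apply Finset.filter_congr
        intro C _
        rw [hiff (A ∪ B) C]
      rw [e1, count_supersets k i₃ ((A ∪ B)ᶜ)]
      have hcc : (A ∪ B)ᶜ.card = k - (A ∪ B).card := by
        rw [Finset.card_compl, Fintype.card_fin]
      have hu : (A ∪ B).card ≤ k := by
        have := Finset.card_le_univ (A ∪ B)
        simpa using this
      rw [hcc]
      exact cz_eq k (A ∪ B).card i₃ hu
    calc (∑ B : Finset (Fin k), ∑ C : Finset (Fin k),
          if B.card = i₂ ∧ C.card = i₃ ∧ A ∪ B ∪ C = Finset.univ then 1 else 0)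
        = ∑ B ∈ Finset.univ.filter (fun B : Finset (Fin k) => B.card = i₂),
            Cz (A ∪ B).card ((k : ℤ) - (i₃ : ℤ)) := by
          rw [Finset.sum_filter]
          apply Finset.sum_congr rfl
          intro B _
          rw [← hC B]
          simp only [ite_and]
          split_ifs with h
          · rfl
          · simp
      _ = ∑ a ∈ Finset.range (i₂ + 1),
            ∑ B ∈ (Finset.univ.filter (fun B : Finset (Fin k) => B.card = i₂)).filter
              (fun B => (A ∩ B).card = a),
              Cz (A ∪ B).card ((k : ℤ) - (i₃ : ℤ)) := by
          rw [Finset.sum_fiberwise_of_maps_to]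
          intro B hB
          simp only [Finset.mem_filter, Finset.mem_univ, true_and] at hB
          rw [Finset.mem_range]
          have : (A ∩ B).card ≤ B.card := Finset.card_le_card Finset.inter_subset_right
          omega
      _ = ∑ a ∈ Finset.range (i₂ + 1),
            Nat.choose i₁ a * Nat.choose (k - i₁) (i₂ - a) *
              Cz (i₁ + i₂ - a) ((k : ℤ) - (i₃ : ℤ)) := by
          apply Finset.sum_congr rfl
          intro a ha
          rw [Finset.mem_range] at ha
          have ha' : a ≤ i₂ := by omega
          have e2 : ∀ B ∈ (Finset.univ.filter (fun B : Finset (Fin k) => B.card = i₂)).filter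
              (fun B => (A ∩ B).card = a),
              Cz (A ∪ B).card ((k : ℤ) - (i₃ : ℤ)) = Cz (i₁ + i₂ - a) ((k : ℤ) - (i₃ : ℤ)) := by
            intro B hB
            simp only [Finset.mem_filter, Finset.mem_univ, true_and] at hB
            have := Finset.card_union_add_card_inter A B
            have hU : (A ∪ B).card = i₁ + i₂ - a := by omega
            rw [hU]
          rw [Finset.sum_congr rfl e2, Finset.sum_const, smul_eq_mul,
            Finset.filter_filter, count_inter k i₂ a ha' A, hA]
  rw [Finset.card_filter, Fintype.sum_prod_type]
  simp only [Fintype.sum_prod_type]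
  have e3 : ∀ A : Finset (Fin k),
      (∑ B : Finset (Fin k), ∑ C : Finset (Fin k),
        if A.card = i₁ ∧ B.card = i₂ ∧ C.card = i₃ ∧ A ∪ B ∪ C = Finset.univ then 1 else 0)
      = if A.card = i₁ then (∑ B : Finset (Fin k), ∑ C : Finset (Fin k),
        if B.card = i₂ ∧ C.card = i₃ ∧ A ∪ B ∪ C = Finset.univ then 1 else 0) else 0 := by
    intro A
    split_ifs with h
    · apply Finset.sum_congr rfl; intro B _; apply Finset.sum_congr rfl; intro C _
      simp [h]
    · apply Finset.sum_eq_zero; intro B _; apply Finset.sum_eq_zero; intro C _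
      simp [h]
  rw [Finset.sum_congr rfl (fun A _ => e3 A), ← Finset.sum_filter]
  rw [Finset.sum_congr rfl (fun A hA => key A (by simpa using hA)),
    Finset.sum_const, smul_eq_mul]
  congr 1
  rw [← Finset.powerset_univ, ← Finset.powersetCard_eq_filter, Finset.card_powersetCard]
  simp

theorem stmt3 (k i₁ i₂ i₃ : ℕ) :
    Nfill 3 k ![i₁, i₂, i₃] =
      Nat.choose k i₁ *
        ∑ a ∈ Finset.range (i₂ + 1),
          Nat.choose i₁ a * Nat.choose (k - i₁) (i₂ - a) *
            Cz (i₁ + i₂ - a) ((k : ℤ) - (i₃ : ℤ)) := by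
  rw [stepA]
  exact stepB k i₁ i₂ i₃
end

section
/- The m-fold black diamond power of x equals the Fubini polynomial: x ◆ x ◆ ··· ◆ x (m factors) = Σ_{k=1}^{m} k!·S(m,k)·x^k, where S(m,k) is the Stirling number of the second kind. -/
open Function Finset
/-- The black diamond product of the power series `A 0, …, A (m-1)`:
`Σ_k x^k Σ_{i₁,…,i_m} a⁽¹⁾_{i₁} ⋯ a⁽ᵐ⁾_{i_m} N(k; i₁, …, i_m)` (the sum may be restricted
to indices `≤ k` since the filling count vanishes otherwise). -/
noncomputable def multiDiamond (m : ℕ) (A : Fin m → PowerSeries ℂ) : PowerSeries ℂ :=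
  PowerSeries.mk fun k =>
    ∑ i : Fin m → Fin (k + 1),
      (∏ j : Fin m, PowerSeries.coeff (i j) (A j)) *
        (Nfill m k (fun j => (i j : ℕ)) : ℂ)

/-- Stirling numbers of the second kind. -/
def stirling2 : ℕ → ℕ → ℕ
  | 0, 0 => 1
  | 0, _ + 1 => 0
  | _ + 1, 0 => 0
  | n + 1, k + 1 => (k + 1) * stirling2 n (k + 1) + stirling2 n k


open scoped Classical

noncomputable def Surj (m k : ℕ) : ℕ :=
  Fintype.card {f : Fin m → Fin k // Function.Surjective f}

lemma Surj_zero_zero : Surj 0 0 = 1 :=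
  Fintype.card_eq_one_iff.mpr
    ⟨⟨finZeroElim, fun y => y.elim0⟩, fun f => Subtype.ext (funext fun x => x.elim0)⟩

lemma Surj_zero_succ (k : ℕ) : Surj 0 (k + 1) = 0 :=
  Fintype.card_eq_zero_iff.mpr ⟨fun ⟨_, hf⟩ => by obtain ⟨x, -⟩ := hf 0; exact x.elim0⟩

lemma Surj_succ_zero (m : ℕ) : Surj (m + 1) 0 = 0 :=
  Fintype.card_eq_zero_iff.mpr ⟨fun ⟨f, _⟩ => (f 0).elim0⟩

lemma surj_congr {α β β' : Type*} [Fintype α] [Fintype β] [Fintype β'] (e : β ≃ β') :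
    Fintype.card {f : α → β // Surjective f} = Fintype.card {f : α → β' // Surjective f} :=
  Fintype.card_congr <| (Equiv.arrowCongr (Equiv.refl α) e).subtypeEquiv fun f => by
    simp [Equiv.arrowCongr]

lemma card_ne (k : ℕ) (v : Fin (k + 1)) : Fintype.card {y : Fin (k + 1) // y ≠ v} = k := by
  simp [Fintype.card_subtype_compl]

def surjEquiv {α β β' : Type*} (e : β ≃ β') :
    {f : α → β // Surjective f} ≃ {f : α → β' // Surjective f} :=
  (Equiv.arrowCongr (Equiv.refl α) e).subtypeEquiv fun f => by
    simp [Equiv.arrowCongr]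

lemma Surj_succ_succ (m k : ℕ) :
    Surj (m + 1) (k + 1) = (k + 1) * (Surj m (k + 1) + Surj m k) := by
  set P : Fin (k + 1) → (Fin m → Fin (k + 1)) → Prop :=
    fun v g => ∀ y, y = v ∨ ∃ x, g x = y with hP
  have e1 : {f : Fin (m + 1) → Fin (k + 1) // Surjective f} ≃
      {p : Fin (k + 1) × (Fin m → Fin (k + 1)) // P p.1 p.2} :=
    { toFun := fun f => ⟨(f.1 0, fun i => f.1 i.succ), fun y => by
        obtain ⟨x, hx⟩ := f.2 y
        cases x using Fin.cases with
        | zero => exact Or.inl hx.symm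
        | succ i => exact Or.inr ⟨i, hx⟩⟩
      invFun := fun p => ⟨Fin.cons p.1.1 p.1.2, fun y => by
        rcases p.2 y with h | ⟨x, hx⟩
        · exact ⟨0, by simp [h]⟩
        · exact ⟨x.succ, by simp [hx]⟩⟩
      left_inv := fun f => Subtype.ext (funext fun x => by
        cases x using Fin.cases <;> simp)
      right_inv := fun p => Subtype.ext (Prod.ext (by simp) (funext fun i => by simp)) }
  have key : ∀ v : Fin (k + 1),
      Fintype.card {g : Fin m → Fin (k + 1) // P v g} = Surj m (k + 1) + Surj m k := by
    intro v
    have hiff : ∀ g : Fin m → Fin (k + 1),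
        P v g ↔ (Surjective g ∨ ((∀ x, g x ≠ v) ∧ P v g)) := by
      intro g
      constructor
      · intro hp
        by_cases hv : ∃ x, g x = v
        · obtain ⟨x0, hx0⟩ := hv
          refine Or.inl fun y => ?_
          rcases hp y with h | h
          · exact ⟨x0, h ▸ hx0⟩
          · exact h
        · exact Or.inr ⟨fun x hx => hv ⟨x, hx⟩, hp⟩
      · rintro (h | ⟨-, h⟩)
        · exact fun y => Or.inr (h y)
        · exact h
    have eB : {g : Fin m → Fin (k + 1) // (∀ x, g x ≠ v) ∧ P v g} ≃
        {h : Fin m → {y : Fin (k + 1) // y ≠ v} // Surjective h} :=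
      { toFun := fun g => ⟨fun x => ⟨g.1 x, g.2.1 x⟩, fun y => by
          rcases g.2.2 y.1 with h | ⟨x, hx⟩
          · exact absurd h y.2
          · exact ⟨x, Subtype.ext hx⟩⟩
        invFun := fun h => ⟨fun x => (h.1 x).1, fun x => (h.1 x).2, fun y => by
          by_cases hy : y = v
          · exact Or.inl hy
          · obtain ⟨x, hx⟩ := h.2 ⟨y, hy⟩
            exact Or.inr ⟨x, congrArg Subtype.val hx⟩⟩
        left_inv := fun g => Subtype.ext rfl
        right_inv := fun h => Subtype.ext rfl }
    have hB : Fintype.card {g : Fin m → Fin (k + 1) // (∀ x, g x ≠ v) ∧ P v g} = Surj m k :=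
      Fintype.card_congr (eB.trans (surjEquiv (Fintype.equivFinOfCardEq (card_ne k v))))
    have hdis : Disjoint (fun g : Fin m → Fin (k + 1) => Surjective g)
        (fun g => (∀ x, g x ≠ v) ∧ P v g) := by
      rw [disjoint_iff_inf_le]
      rintro g ⟨hs, hne, -⟩
      obtain ⟨x, hx⟩ := hs v
      exact hne x hx
    calc Fintype.card {g : Fin m → Fin (k + 1) // P v g}
        = Fintype.card {g : Fin m → Fin (k + 1) //
            Surjective g ∨ ((∀ x, g x ≠ v) ∧ P v g)} :=
          Fintype.card_congr (Equiv.subtypeEquiv (Equiv.refl _) (by simpa using hiff))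
      _ = Fintype.card {g : Fin m → Fin (k + 1) // Surjective g} +
            Fintype.card {g : Fin m → Fin (k + 1) // (∀ x, g x ≠ v) ∧ P v g} :=
          Fintype.card_subtype_or_disjoint _ _ hdis
      _ = Surj m (k + 1) + Surj m k := by rw [hB]; rfl
  calc Surj (m + 1) (k + 1)
      = Fintype.card {p : Fin (k + 1) × (Fin m → Fin (k + 1)) // P p.1 p.2} :=
        Fintype.card_congr e1
    _ = ∑ v : Fin (k + 1), Fintype.card {g : Fin m → Fin (k + 1) // P v g} :=
        (Fintype.card_congr (Equiv.subtypeProdEquivSigmaSubtype P)).trans Fintype.card_sigma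
    _ = (k + 1) * (Surj m (k + 1) + Surj m k) := by
        simp [key, mul_comm]

lemma stirling2_eq_zero {m k : ℕ} (h : m < k) : stirling2 m k = 0 := by
  induction m generalizing k with
  | zero => cases k with
    | zero => omega
    | succ k => rfl
  | succ m ih => cases k with
    | zero => omega
    | succ k =>
      rw [stirling2, ih (by omega), ih (by omega)]
      ring

lemma Surj_eq (m k : ℕ) : Surj m k = k.factorial * stirling2 m k := by
  induction m generalizing k with
  | zero => cases k with
    | zero => simp [Surj_zero_zero, stirling2]
    | succ k => simp [Surj_zero_succ, stirling2]
  | succ m ih => cases k with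
    | zero => simp [Surj_succ_zero, stirling2]
    | succ k =>
      rw [Surj_succ_succ, ih, ih, stirling2, Nat.factorial_succ]
      ring

lemma Nfill_one (m k : ℕ) : Nfill m k (fun _ => 1) = Surj m k := by
  let Φ : {g : Fin m → Fin k // Surjective g} →
      {f : Fin m → Fin k → Bool //
        (∀ j : Fin m, (Finset.univ.filter fun c : Fin k => f j c = true).card =
          (fun _ : Fin m => 1) j) ∧
        (∀ c : Fin k, ∃ j : Fin m, f j c = true)} :=
    fun g => ⟨fun j c => decide (g.1 j = c),
      ⟨fun j => by simp [Finset.filter_eq], fun c => by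
        obtain ⟨j, hj⟩ := g.2 c; exact ⟨j, by simp [hj]⟩⟩⟩
  have hinj : Injective Φ := by
    rintro ⟨g, hg⟩ ⟨g', hg'⟩ h
    have h2 := congrArg Subtype.val h
    refine Subtype.ext (funext fun j => ?_)
    have h3 : decide (g j = g' j) = decide (g' j = g' j) := congrFun (congrFun h2 j) (g' j)
    simpa using h3
  have hsurj : Surjective Φ := by
    rintro ⟨f, h1, h2⟩
    choose g hg using fun j => Finset.card_eq_one.mp (h1 j)
    have hval : ∀ j c, f j c = true ↔ g j = c := by
      intro j c
      have : c ∈ Finset.univ.filter (fun c => f j c = true) ↔ c ∈ ({g j} : Finset (Fin k)) := by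
        rw [hg j]
      rw [Finset.mem_filter, Finset.mem_singleton] at this
      constructor
      · intro h; exact (this.mp ⟨Finset.mem_univ c, h⟩).symm
      · intro h; exact (this.mpr h.symm).2
    refine ⟨⟨fun j => g j, fun c => ?_⟩, Subtype.ext (funext fun j => funext fun c => ?_)⟩
    · obtain ⟨j, hj⟩ := h2 c
      exact ⟨j, (hval j c).mp hj⟩
    · show decide (g j = c) = f j c
      cases hb : f j c with
      | false =>
        rw [decide_eq_false_iff_not]
        intro h
        rw [(hval j c).mpr h] at hb
        cases hb
      | true =>
        rw [decide_eq_true_eq]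
        exact (hval j c).mp hb
  exact ((Fintype.card_of_bijective ⟨hinj, hsurj⟩)).symm

theorem stmt10 (m : ℕ) (hm : 1 ≤ m) :
    multiDiamond m (fun _ => PowerSeries.X) =
      ∑ k ∈ Finset.Icc 1 m,
        ((Nat.factorial k * stirling2 m k : ℕ) : ℂ) • (PowerSeries.X : PowerSeries ℂ) ^ k := by
  ext n
  rw [multiDiamond, PowerSeries.coeff_mk]
  have hRHS : (PowerSeries.coeff n) (∑ k ∈ Finset.Icc 1 m,
      ((Nat.factorial k * stirling2 m k : ℕ) : ℂ) • (PowerSeries.X : PowerSeries ℂ) ^ k) =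
      if n ∈ Finset.Icc 1 m then ((Nat.factorial n * stirling2 m n : ℕ) : ℂ) else 0 := by
    rw [map_sum]
    rw [← Finset.sum_ite_eq (Finset.Icc 1 m) n
      (fun k => ((Nat.factorial k * stirling2 m k : ℕ) : ℂ))]
    refine Finset.sum_congr rfl fun k _ => ?_
    rw [LinearMap.map_smul, PowerSeries.coeff_X_pow, smul_eq_mul, mul_ite, mul_one, mul_zero]
  rw [hRHS]
  cases n with
  | zero =>
    rw [if_neg (by simp)]
    refine Finset.sum_eq_zero fun i _ => ?_
    have : ∏ j : Fin m, (PowerSeries.coeff (R := ℂ) (i j)) PowerSeries.X = 0 := by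
      refine Finset.prod_eq_zero (Finset.mem_univ ⟨0, hm⟩) ?_
      simp [PowerSeries.coeff_X]
    rw [this, zero_mul]
  | succ n' =>
    set n := n' + 1
    have h1n : (1 : ℕ) < n + 1 := by omega
    have hLHS : ∑ i : Fin m → Fin (n + 1),
        (∏ j : Fin m, (PowerSeries.coeff (i j)) PowerSeries.X) *
          ((Nfill m n fun j => ((i j : ℕ))) : ℂ) =
        ((Nat.factorial n * stirling2 m n : ℕ) : ℂ) := by
      rw [Finset.sum_eq_single (fun _ => (⟨1, h1n⟩ : Fin (n + 1)))]
      · have hprod : ∏ j : Fin m, (PowerSeries.coeff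
            (((fun _ => (⟨1, h1n⟩ : Fin (n + 1))) j : ℕ))) (PowerSeries.X (R := ℂ)) = 1 := by
          simp [PowerSeries.coeff_X]
        rw [hprod, one_mul]
        norm_cast
        rw [show (fun j : Fin m => ((⟨1, h1n⟩ : Fin (n + 1)) : ℕ)) = (fun _ => 1) from rfl]
        rw [Nfill_one, Surj_eq]
      · intro i _ hi
        obtain ⟨j, hj⟩ := Function.ne_iff.mp hi
        have : (PowerSeries.coeff (R := ℂ) (i j)) PowerSeries.X = 0 := by
          rw [PowerSeries.coeff_X, if_neg]
          intro h
          exact hj (Fin.ext (by simpa using h))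
        rw [Finset.prod_eq_zero (Finset.mem_univ j) this, zero_mul]
      · intro h
        exact absurd (Finset.mem_univ _) h
    rw [hLHS]
    by_cases hnm : n ≤ m
    · rw [if_pos (by simp [Finset.mem_Icc]; omega)]
    · rw [if_neg (by simp [Finset.mem_Icc]; omega), stirling2_eq_zero (by omega)]
      simp
end

section
/- The number of 0-1 matrices with m rows, n columns, exactly r ones, no all-zero row, and no all-zero column equals Σ_{b=0}^{m} Σ_{a=0}^{n} (−1)^{n+m−(b+a)}·C(m,b)·C(n,a)·C(ab, r). -/
open Finset

-- sum of signs over supersets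
lemma sup_sum {γ : Type*} [Fintype γ] [DecidableEq γ] (t : Finset γ) :
    ∑ s ∈ (univ : Finset γ).powerset.filter (fun s => t ⊆ s),
      (-1:ℤ)^(Fintype.card γ - s.card) = if t = univ then 1 else 0 := by
  have : ∑ s ∈ (univ : Finset γ).powerset.filter (fun s => t ⊆ s),
      (-1:ℤ)^(Fintype.card γ - s.card) = ∑ u ∈ (univ \ t).powerset, (-1:ℤ)^u.card := by
    refine Finset.sum_nbij' (fun s => univ \ s) (fun u => univ \ u) ?_ ?_ ?_ ?_ ?_
    · intro s hs
      simp only [mem_filter, mem_powerset] at hs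
      exact mem_powerset.2 (sdiff_subset_sdiff (le_refl _) hs.2)
    · intro u hu
      simp only [mem_filter, mem_powerset]
      refine ⟨subset_univ _, ?_⟩
      rw [mem_powerset] at hu
      intro x hx
      simp only [mem_sdiff, mem_univ, true_and]
      intro hxu
      exact (mem_sdiff.1 (hu hxu)).2 hx
    · intro s hs; simp [sdiff_sdiff_right_self, inf_eq_inter, univ_inter]
    · intro u hu; simp [sdiff_sdiff_right_self, inf_eq_inter, univ_inter]
    · intro s hs
      rw [Finset.card_univ_diff]
  rw [this, Finset.sum_powerset_neg_one_pow_card]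
  by_cases h : t = univ
  · subst h; simp
  · rw [if_neg h, if_neg]
    intro he
    exact h (Finset.univ_subset_iff.1 (Finset.sdiff_eq_empty_iff_subset.1 he))


-- binomial inversion over sets
lemma inv1 {γ : Type*} [Fintype γ] [DecidableEq γ] (h : Finset γ → ℤ) :
    ∑ s ∈ (univ : Finset γ).powerset, (-1:ℤ)^(Fintype.card γ - s.card) *
      (∑ t ∈ s.powerset, h t) = h univ := by
  have swap : ∑ s ∈ (univ : Finset γ).powerset, ∑ t ∈ s.powerset,
      (-1:ℤ)^(Fintype.card γ - s.card) * h t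
      = ∑ t ∈ (univ : Finset γ).powerset,
          ∑ s ∈ (univ : Finset γ).powerset.filter (fun s => t ⊆ s),
            (-1:ℤ)^(Fintype.card γ - s.card) * h t := by
    refine Finset.sum_comm' ?_
    intro s t
    simp only [mem_powerset, mem_filter, subset_univ, true_and, and_true]
  calc ∑ s ∈ (univ : Finset γ).powerset, (-1:ℤ)^(Fintype.card γ - s.card) *
      (∑ t ∈ s.powerset, h t)
      = ∑ s ∈ (univ : Finset γ).powerset, ∑ t ∈ s.powerset,
          (-1:ℤ)^(Fintype.card γ - s.card) * h t := by
        simp_rw [Finset.mul_sum]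
    _ = ∑ t ∈ (univ : Finset γ).powerset,
          (∑ s ∈ (univ : Finset γ).powerset.filter (fun s => t ⊆ s),
            (-1:ℤ)^(Fintype.card γ - s.card)) * h t := by
        rw [swap]; simp_rw [Finset.sum_mul]
    _ = ∑ t ∈ (univ : Finset γ).powerset, (if t = univ then 1 else 0) * h t := by
        refine Finset.sum_congr rfl fun t _ => ?_
        rw [sup_sum]
    _ = h univ := by
        simp only [ite_mul, one_mul, zero_mul]
        rw [Finset.sum_ite_eq' _ (univ : Finset γ) h]
        simp

def ee (m n r : ℕ) (s : Finset (Fin m)) (t : Finset (Fin n)) : ℕ :=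
  (((univ : Finset (Fin m × Fin n)).powersetCard r).filter
    (fun u => u.image Prod.fst = s ∧ u.image Prod.snd = t)).card

lemma fiber_eq (m n r : ℕ) (s : Finset (Fin m)) (t : Finset (Fin n))
    (s' : Finset (Fin m)) (t' : Finset (Fin n)) (hs : s' ⊆ s) (ht : t' ⊆ t) :
    ((s ×ˢ t).powersetCard r).filter
      (fun u => (u.image Prod.fst, u.image Prod.snd) = (s', t'))
    = ((univ : Finset (Fin m × Fin n)).powersetCard r).filter
      (fun u => u.image Prod.fst = s' ∧ u.image Prod.snd = t') := by
  ext u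
  simp only [mem_filter, Finset.mem_powersetCard, Prod.mk.injEq, subset_univ, true_and]
  constructor
  · rintro ⟨⟨_, hc⟩, h1, h2⟩; exact ⟨hc, h1, h2⟩
  · rintro ⟨hc, h1, h2⟩
    refine ⟨⟨?_, hc⟩, h1, h2⟩
    intro p hp
    rw [Finset.mem_product]
    exact ⟨hs (h1 ▸ Finset.mem_image_of_mem Prod.fst hp),
      ht (h2 ▸ Finset.mem_image_of_mem Prod.snd hp)⟩

lemma sumA (m n r : ℕ) (s : Finset (Fin m)) (t : Finset (Fin n)) :
    ∑ s' ∈ s.powerset, ∑ t' ∈ t.powerset, ee m n r s' t'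
      = (s.card * t.card).choose r := by
  have h1 : (s.card * t.card).choose r = ((s ×ˢ t).powersetCard r).card := by
    rw [Finset.card_powersetCard, Finset.card_product]
  have H : ∀ u ∈ (s ×ˢ t).powersetCard r,
      (u.image Prod.fst, u.image Prod.snd) ∈ s.powerset ×ˢ t.powerset := by
    intro u hu
    rw [Finset.mem_powersetCard] at hu
    rw [Finset.mem_product, mem_powerset, mem_powerset]
    constructor
    · intro x hx
      obtain ⟨p, hp, rfl⟩ := Finset.mem_image.1 hx
      exact (Finset.mem_product.1 (hu.1 hp)).1
    · intro x hx
      obtain ⟨p, hp, rfl⟩ := Finset.mem_image.1 hx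
      exact (Finset.mem_product.1 (hu.1 hp)).2
  rw [h1, Finset.card_eq_sum_card_fiberwise H, Finset.sum_product]
  refine Finset.sum_congr rfl fun s' hs' => Finset.sum_congr rfl fun t' ht' => ?_
  rw [fiber_eq m n r s t s' t' (mem_powerset.1 hs') (mem_powerset.1 ht')]
  rfl

lemma cardB (m n r : ℕ) :
    Fintype.card {f : Fin m → Fin n → Bool //
        (Finset.univ.filter fun p : Fin m × Fin n => f p.1 p.2 = true).card = r ∧
        (∀ i : Fin m, ∃ j : Fin n, f i j = true) ∧
        (∀ j : Fin n, ∃ i : Fin m, f i j = true)} = ee m n r univ univ := by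
  rw [ee, ← Fintype.card_coe]
  refine Fintype.card_congr ⟨fun f => ⟨univ.filter (fun p : Fin m × Fin n => f.1 p.1 p.2 = true), ?_⟩,
    fun u => ⟨fun i j => decide ((i, j) ∈ u.1), ?_⟩, ?_, ?_⟩
  · obtain ⟨f, hc, hr, hcol⟩ := f
    simp only [mem_filter, Finset.mem_powersetCard, subset_univ, true_and]
    refine ⟨hc, ?_, ?_⟩
    · rw [Finset.eq_univ_iff_forall]
      intro i
      obtain ⟨j, hj⟩ := hr i
      exact Finset.mem_image.2 ⟨(i, j), Finset.mem_filter.2 ⟨mem_univ _, hj⟩, rfl⟩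
    · rw [Finset.eq_univ_iff_forall]
      intro j
      obtain ⟨i, hi⟩ := hcol j
      exact Finset.mem_image.2 ⟨(i, j), Finset.mem_filter.2 ⟨mem_univ _, hi⟩, rfl⟩
  · obtain ⟨u, hu⟩ := u
    simp only [mem_filter, Finset.mem_powersetCard, subset_univ, true_and] at hu
    obtain ⟨hc, h1, h2⟩ := hu
    have key : (univ.filter fun p : Fin m × Fin n => decide ((p.1, p.2) ∈ u) = true) = u := by
      ext p
      simp
    refine ⟨by rw [key]; exact hc, ?_, ?_⟩
    · intro i
      have : i ∈ u.image Prod.fst := by rw [h1]; exact mem_univ i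
      obtain ⟨p, hp, hpe⟩ := Finset.mem_image.1 this
      exact ⟨p.2, by simp [← hpe, hp]⟩
    · intro j
      have : j ∈ u.image Prod.snd := by rw [h2]; exact mem_univ j
      obtain ⟨p, hp, hpe⟩ := Finset.mem_image.1 this
      exact ⟨p.1, by simp [← hpe, hp]⟩
  · intro f
    apply Subtype.ext
    funext i j
    simp [Finset.mem_filter]
  · intro u
    apply Subtype.ext
    ext p
    simp

lemma step1 (m n r : ℕ) (s : Finset (Fin m)) :
    ∑ t ∈ (univ : Finset (Fin n)).powerset,
        (-1:ℤ)^(n - t.card) * ((s.card * t.card).choose r : ℤ)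
      = ∑ s' ∈ s.powerset, (ee m n r s' univ : ℤ) := by
  have h := inv1 (γ := Fin n) (fun t' => ∑ s' ∈ s.powerset, (ee m n r s' t' : ℤ))
  simp only [Fintype.card_fin] at h
  rw [← h]
  refine Finset.sum_congr rfl fun t _ => ?_
  congr 1
  rw [Finset.sum_comm]
  exact_mod_cast (sumA m n r s t).symm

lemma step2 (m n r : ℕ) :
    ∑ s ∈ (univ : Finset (Fin m)).powerset, (-1:ℤ)^(m - s.card) *
        (∑ s' ∈ s.powerset, (ee m n r s' univ : ℤ))
      = (ee m n r univ univ : ℤ) := by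
  have h := inv1 (γ := Fin m) (fun s' => (ee m n r s' univ : ℤ))
  simp only [Fintype.card_fin] at h
  exact h

theorem stmt12 (m n r : ℕ) :
    (Fintype.card {f : Fin m → Fin n → Bool //
        (Finset.univ.filter fun p : Fin m × Fin n => f p.1 p.2 = true).card = r ∧
        (∀ i : Fin m, ∃ j : Fin n, f i j = true) ∧
        (∀ j : Fin n, ∃ i : Fin m, f i j = true)} : ℤ) =
      ∑ b ∈ Finset.range (m + 1), ∑ a ∈ Finset.range (n + 1),
        (-1 : ℤ) ^ (n + m - (b + a)) * Nat.choose m b * Nat.choose n a *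
          Nat.choose (a * b) r := by
  rw [cardB m n r]
  rw [← step2 m n r]
  have hm : ((univ : Finset (Fin m)).card) = m := by simp
  have hn : ((univ : Finset (Fin n)).card) = n := by simp
  calc ∑ s ∈ (univ : Finset (Fin m)).powerset, (-1:ℤ)^(m - s.card) *
        (∑ s' ∈ s.powerset, (ee m n r s' univ : ℤ))
      = ∑ s ∈ (univ : Finset (Fin m)).powerset, (-1:ℤ)^(m - s.card) *
        (∑ t ∈ (univ : Finset (Fin n)).powerset,
          (-1:ℤ)^(n - t.card) * ((s.card * t.card).choose r : ℤ)) := by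
        refine Finset.sum_congr rfl fun s _ => ?_
        rw [step1 m n r s]
    _ = ∑ s ∈ (univ : Finset (Fin m)).powerset,
          ∑ t ∈ (univ : Finset (Fin n)).powerset,
            (-1:ℤ)^(m - s.card) * ((-1:ℤ)^(n - t.card) * ((s.card * t.card).choose r : ℤ)) := by
        simp_rw [Finset.mul_sum]
    _ = ∑ b ∈ Finset.range (m + 1), m.choose b •
          ∑ t ∈ (univ : Finset (Fin n)).powerset,
            (-1:ℤ)^(m - b) * ((-1:ℤ)^(n - t.card) * ((b * t.card).choose r : ℤ)) := by
        rw [Finset.sum_powerset_apply_card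
          (fun b => ∑ t ∈ (univ : Finset (Fin n)).powerset,
            (-1:ℤ)^(m - b) * ((-1:ℤ)^(n - t.card) * ((b * t.card).choose r : ℤ)))]
        rw [hm]
    _ = ∑ b ∈ Finset.range (m + 1), m.choose b •
          ∑ a ∈ Finset.range (n + 1), n.choose a •
            ((-1:ℤ)^(m - b) * ((-1:ℤ)^(n - a) * ((b * a).choose r : ℤ))) := by
        refine Finset.sum_congr rfl fun b _ => ?_
        congr 1
        rw [Finset.sum_powerset_apply_card
          (fun a => (-1:ℤ)^(m - b) * ((-1:ℤ)^(n - a) * ((b * a).choose r : ℤ)))]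
        rw [hn]
    _ = ∑ b ∈ Finset.range (m + 1), ∑ a ∈ Finset.range (n + 1),
        (-1 : ℤ) ^ (n + m - (b + a)) * Nat.choose m b * Nat.choose n a *
          Nat.choose (a * b) r := by
        refine Finset.sum_congr rfl fun b hb => ?_
        rw [Finset.smul_sum]
        refine Finset.sum_congr rfl fun a ha => ?_
        rw [Finset.mem_range] at hb ha
        have hb' : b ≤ m := Nat.lt_succ_iff.1 hb
        have ha' : a ≤ n := Nat.lt_succ_iff.1 ha
        have hexp : (m - b) + (n - a) = n + m - (b + a) := by omega
        rw [← hexp, pow_add, Nat.mul_comm b a]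
        
        ring
end

section
/- For all positive integers k ≤ n: Σ_{a=1}^{n} Σ_{b=1}^{n} (−1)^{a+b}·C(ab−1, k−1)·C(n,a)·C(n,b) = (−1)^{k−1}. -/
open Polynomial Finset fwdDiff

private lemma natDeg_X_add_one13 : (X + 1 : ℤ[X]).natDegree = 1 := by
  simpa using Polynomial.natDegree_X_add_C (1 : ℤ)

private lemma deg_drop13 (p : ℤ[X]) (hp : p ≠ 0) : (p.comp (X + 1) - p).degree < p.degree := by
  rcases eq_or_ne p.natDegree 0 with h0 | h0
  · obtain ⟨c, rfl⟩ := Polynomial.natDegree_eq_zero.mp h0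
    rw [Polynomial.C_comp, sub_self, Polynomial.degree_zero]
    exact bot_lt_iff_ne_bot.mpr (Polynomial.degree_eq_bot.not.mpr hp)
  · have hlc : (p.comp (X + 1)).leadingCoeff = p.leadingCoeff := by
      rw [Polynomial.leadingCoeff_comp (by rw [natDeg_X_add_one13]; norm_num)]
      have h1 : (X + 1 : ℤ[X]).leadingCoeff = 1 := by
        simpa using (Polynomial.monic_X_add_C (1 : ℤ)).leadingCoeff
      rw [h1, one_pow, mul_one]
    have hne : p.comp (X + 1) ≠ 0 := by
      intro h
      rw [h, Polynomial.leadingCoeff_zero] at hlc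
      exact hp (Polynomial.leadingCoeff_eq_zero.mp hlc.symm)
    have hdeg : (p.comp (X + 1)).degree = p.degree := by
      rw [Polynomial.degree_eq_natDegree hne, Polynomial.degree_eq_natDegree hp,
        Polynomial.natDegree_comp, natDeg_X_add_one13, mul_one]
    have hfin := Polynomial.degree_sub_lt hdeg hne hlc
    rwa [hdeg] at hfin

private lemma fwdDiff_eval13 (p : ℤ[X]) :
    Δ_[1] (fun x : ℤ ↦ p.eval x) = fun x : ℤ ↦ (p.comp (X + 1) - p).eval x := by
  funext x
  simp [fwdDiff, Polynomial.eval_comp]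

private lemma iter_fwdDiff_zero13 : ∀ (m : ℕ) (p : ℤ[X]), p.degree < (m : ℕ) →
    (Δ_[1])^[m] (fun x : ℤ ↦ p.eval x) = fun _ ↦ 0 := by
  intro m
  induction m with
  | zero =>
    intro p hp
    have h0 : p = 0 := by
      rw [← Polynomial.degree_eq_bot]
      exact Nat.WithBot.lt_zero_iff.mp (by exact_mod_cast hp)
    funext x
    simp [h0]
  | succ m ih =>
    intro p hp
    rw [Function.iterate_succ_apply, fwdDiff_eval13]
    apply ih
    rcases eq_or_ne p 0 with rfl | hne
    · simp only [Polynomial.zero_comp, sub_zero, Polynomial.degree_zero]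
      exact_mod_cast WithBot.bot_lt_coe m
    · set q := p.comp (X + 1) - p with hq
      rcases eq_or_ne q 0 with h | h
      · rw [h, Polynomial.degree_zero]
        exact_mod_cast WithBot.bot_lt_coe m
      · rw [← Polynomial.natDegree_lt_iff_degree_lt h]
        have h1 : q.natDegree < p.natDegree :=
          Polynomial.natDegree_lt_natDegree h (deg_drop13 p hne)
        have h2 : p.natDegree < m + 1 :=
          (Polynomial.natDegree_lt_iff_degree_lt hne).mpr (by exact_mod_cast hp)
        omega

private lemma alt_sum_poly13 (n : ℕ) (p : ℤ[X]) (hdeg : p.degree < (n : ℕ)) :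
    ∑ a ∈ Finset.range (n + 1), (-1 : ℤ) ^ a * (n.choose a) * p.eval (a : ℤ) = 0 := by
  have h := fwdDiff_iter_eq_sum_shift (1 : ℤ) (fun x : ℤ ↦ p.eval x) n 0
  rw [iter_fwdDiff_zero13 n p hdeg] at h
  simp only [zero_add, nsmul_eq_mul, mul_one, smul_eq_mul] at h
  have h' : ∑ a ∈ Finset.range (n + 1),
      (-1 : ℤ) ^ (n - a) * (n.choose a) * p.eval (a : ℤ) = 0 := by
    rw [← h]
  calc ∑ a ∈ Finset.range (n + 1), (-1 : ℤ) ^ a * (n.choose a) * p.eval (a : ℤ)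
      = ∑ a ∈ Finset.range (n + 1),
          (-1 : ℤ) ^ n * ((-1 : ℤ) ^ (n - a) * (n.choose a) * p.eval (a : ℤ)) := by
        apply Finset.sum_congr rfl
        intro a ha
        have han : a ≤ n := Nat.lt_succ_iff.mp (Finset.mem_range.mp ha)
        have key : (-1 : ℤ) ^ n * (-1 : ℤ) ^ (n - a) = (-1 : ℤ) ^ a := by
          rw [← pow_add, show n + (n - a) = a + 2 * (n - a) by omega, pow_add, pow_mul]
          norm_num
        calc (-1 : ℤ) ^ a * (n.choose a) * p.eval (a : ℤ)
            = ((-1 : ℤ) ^ n * (-1 : ℤ) ^ (n - a)) * (n.choose a) * p.eval (a : ℤ) := by rw [key]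
          _ = (-1 : ℤ) ^ n * ((-1 : ℤ) ^ (n - a) * (n.choose a) * p.eval (a : ℤ)) := by ring
    _ = (-1 : ℤ) ^ n * ∑ a ∈ Finset.range (n + 1),
          (-1 : ℤ) ^ (n - a) * (n.choose a) * p.eval (a : ℤ) := by rw [Finset.mul_sum]
    _ = 0 := by rw [h', mul_zero]

private lemma split13 (n : ℕ) (f : ℕ → ℤ) :
    ∑ i ∈ Finset.range (n + 1), f i = f 0 + ∑ i ∈ Finset.Icc 1 n, f i := by
  rw [Finset.sum_range_succ', ← Finset.Ico_add_one_right_eq_Icc, Finset.sum_Ico_eq_sum_range]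
  simp [Nat.succ_sub_one, add_comm]

private lemma inner13 (n k b : ℕ) (hk : 1 ≤ k) (hkn : k ≤ n) (hb : 1 ≤ b) :
    ∑ a ∈ Finset.Icc 1 n, (-1 : ℤ) ^ a * (n.choose a) *
        (((k-1).factorial : ℤ) * ((a * b - 1).choose (k-1))) =
      -((-1 : ℤ) ^ (k-1) * ((k-1).factorial : ℤ)) := by
  set m := k - 1 with hm
  set p : Polynomial ℤ := (descPochhammer ℤ m).comp (Polynomial.C (b : ℤ) * Polynomial.X +
    Polynomial.C (-1)) with hp
  have hdeg : p.degree < (n : ℕ) := by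
    have h1 : p.natDegree = m := by
      rw [hp, Polynomial.natDegree_comp, descPochhammer_natDegree,
        Polynomial.natDegree_linear (Nat.cast_ne_zero.mpr (by omega) : (b:ℤ) ≠ 0), mul_one]
    calc p.degree ≤ (p.natDegree : WithBot ℕ) := Polynomial.degree_le_natDegree
      _ < (n : ℕ) := by rw [h1]; exact_mod_cast (by omega : m < n)
  have heval : ∀ a : ℕ, 1 ≤ a → p.eval (a : ℤ) =
      ((k-1).factorial : ℤ) * ((a * b - 1).choose (k-1)) := by
    intro a ha
    rw [hp, Polynomial.eval_comp]
    have h2 : (Polynomial.C (b : ℤ) * Polynomial.X + Polynomial.C (-1)).eval (a : ℤ)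
        = ((a * b - 1 : ℕ) : ℤ) := by
      have hab : 1 ≤ a * b := Nat.one_le_iff_ne_zero.mpr (by positivity)
      push_cast [Nat.cast_sub hab]
      simp only [Polynomial.eval_add, Polynomial.eval_mul, Polynomial.eval_C, Polynomial.eval_X]
      ring
    rw [h2, descPochhammer_eval_eq_descFactorial,
      Nat.descFactorial_eq_factorial_mul_choose]
    push_cast
    ring
  have heval0 : p.eval (0 : ℤ) = (-1 : ℤ) ^ m * (m.factorial : ℤ) := by
    rw [hp, Polynomial.eval_comp]
    have h2 : (Polynomial.C (b : ℤ) * Polynomial.X + Polynomial.C (-1)).eval (0 : ℤ) = -1 := by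
      simp
    rw [h2, descPochhammer_eval_eq_ascPochhammer]
    have h3 : (-1 : ℤ) - (m : ℤ) + 1 = -(m : ℤ) := by ring
    rw [h3, ascPochhammer_eval_neg_eq_descPochhammer,
      show ((m : ℤ)) = ((m : ℕ) : ℤ) by norm_cast,
      descPochhammer_eval_eq_descFactorial, Nat.descFactorial_self]
  have halt := alt_sum_poly13 n p hdeg
  rw [split13 n (fun a ↦ (-1 : ℤ) ^ a * (n.choose a) * p.eval (a : ℤ))] at halt
  simp only [pow_zero, Nat.choose_zero_right, Nat.cast_one, one_mul, Nat.cast_zero] at halt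
  have hsum : ∑ a ∈ Finset.Icc 1 n, (-1 : ℤ) ^ a * (n.choose a) * p.eval (a : ℤ)
      = ∑ a ∈ Finset.Icc 1 n, (-1 : ℤ) ^ a * (n.choose a) *
          (((k-1).factorial : ℤ) * ((a * b - 1).choose (k-1))) := by
    apply Finset.sum_congr rfl
    intro a ha
    rw [heval a (Finset.mem_Icc.mp ha).1]
  rw [hsum, heval0] at halt
  linarith

private lemma bsum13 (n : ℕ) (hn : n ≠ 0) :
    ∑ b ∈ Finset.Icc 1 n, (-1 : ℤ) ^ b * (n.choose b) = -1 := by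
  have h := Int.alternating_sum_range_choose_of_ne hn
  rw [split13 n (fun b ↦ (-1 : ℤ) ^ b * (n.choose b))] at h
  simp only [pow_zero, Nat.choose_zero_right, Nat.cast_one, one_mul] at h
  linarith

theorem stmt13 (n k : ℕ) (hk : 1 ≤ k) (hkn : k ≤ n) :
    ∑ a ∈ Finset.Icc 1 n, ∑ b ∈ Finset.Icc 1 n,
        (-1 : ℤ) ^ (a + b) * Nat.choose (a * b - 1) (k - 1) *
          Nat.choose n a * Nat.choose n b = (-1 : ℤ) ^ (k - 1) := by
  have hK : ((k-1).factorial : ℤ) ≠ 0 := by exact_mod_cast (Nat.factorial_pos (k-1)).ne'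
  apply mul_right_cancel₀ hK
  calc (∑ a ∈ Finset.Icc 1 n, ∑ b ∈ Finset.Icc 1 n,
        (-1 : ℤ) ^ (a + b) * ((a * b - 1).choose (k-1)) * (n.choose a) * (n.choose b))
        * ((k-1).factorial : ℤ)
      = ∑ b ∈ Finset.Icc 1 n, (-1 : ℤ) ^ b * (n.choose b) *
          (∑ a ∈ Finset.Icc 1 n, (-1 : ℤ) ^ a * (n.choose a) *
            (((k-1).factorial : ℤ) * ((a * b - 1).choose (k-1)))) := by
        rw [Finset.sum_comm, Finset.sum_mul]
        apply Finset.sum_congr rfl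
        intro b _
        rw [Finset.sum_mul, Finset.mul_sum]
        apply Finset.sum_congr rfl
        intro a _
        rw [pow_add]
        ring
    _ = ∑ b ∈ Finset.Icc 1 n, (-1 : ℤ) ^ b * (n.choose b) *
          (-((-1 : ℤ) ^ (k-1) * ((k-1).factorial : ℤ))) := by
        apply Finset.sum_congr rfl
        intro b hb
        rw [inner13 n k b hk hkn (Finset.mem_Icc.mp hb).1]
    _ = (∑ b ∈ Finset.Icc 1 n, (-1 : ℤ) ^ b * (n.choose b)) *
          (-((-1 : ℤ) ^ (k-1) * ((k-1).factorial : ℤ))) := by rw [Finset.sum_mul]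
    _ = (-1 : ℤ) ^ (k-1) * ((k-1).factorial : ℤ) := by
        rw [bsum13 n (by omega)]
        ring
end

section
/- For all positive integers n, k, a with 1 ≤ k ≤ n and 1 ≤ a ≤ n: Σ_{b=1}^{n} (−1)^b·C(n,b)·C(ab−1, k−1) = (−1)^k. -/
open Polynomial Finset

private lemma fwdDiff_iter_zero_fn (m : ℕ) :
    (fwdDiff (1 : ℕ))^[m] (fun _ : ℕ => (0 : ℚ)) = fun _ => 0 := by
  induction m with
  | zero => rfl
  | succ m ih =>
    rw [Function.iterate_succ_apply]
    have : fwdDiff (1 : ℕ) (fun _ : ℕ => (0 : ℚ)) = fun _ => 0 := by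
      funext b; simp [fwdDiff]
    rw [this, ih]

private lemma fwdDiff_poly (P : ℚ[X]) :
    fwdDiff (1 : ℕ) (fun b : ℕ => P.eval (b : ℚ))
      = fun b : ℕ => (P.comp (X + C 1) - P).eval (b : ℚ) := by
  funext b
  simp only [fwdDiff, eval_sub, eval_comp, eval_add, eval_X, eval_C]
  push_cast
  ring_nf

private lemma fwdDiff_iter_poly (n : ℕ) (P : ℚ[X]) (h : P.natDegree < n) :
    (fwdDiff (1 : ℕ))^[n] (fun b : ℕ => P.eval (b : ℚ)) = fun _ => 0 := by
  induction n generalizing P with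
  | zero => omega
  | succ m ih =>
    rw [Function.iterate_succ_apply, fwdDiff_poly]
    set Q := P.comp (X + C 1) - P with hQ
    by_cases hQ0 : Q = 0
    · rw [hQ0]
      simpa using fwdDiff_iter_zero_fn m
    · by_cases hP0 : P.natDegree = 0
      · exfalso
        apply hQ0
        obtain ⟨c, rfl⟩ := Polynomial.natDegree_eq_zero.mp hP0
        simp [hQ]
      · apply ih
        have hPne : P ≠ 0 := by
          intro h0; apply hP0; rw [h0]; simp
        have hcompne : P.comp (X + C (1 : ℚ)) ≠ 0 :=
          fun h0 => hPne (Polynomial.comp_X_add_C_eq_zero_iff.mp h0)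
        have hdeg1 : (X + C (1 : ℚ)).natDegree = 1 := natDegree_X_add_C 1
        have hnd : (P.comp (X + C 1)).natDegree = P.natDegree := by
          rw [natDegree_comp, hdeg1, mul_one]
        have hdegeq : (P.comp (X + C 1)).degree = P.degree := by
          rw [degree_eq_natDegree hcompne, degree_eq_natDegree hPne, hnd]
        have hlc : (P.comp (X + C 1)).leadingCoeff = P.leadingCoeff := by
          rw [leadingCoeff_comp (by rw [hdeg1]; norm_num), leadingCoeff_X_add_C,
            one_pow, mul_one]
        have hdlt : Q.degree < (P.comp (X + C 1)).degree :=
          degree_sub_lt hdegeq hcompne hlc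
        have : Q.natDegree < P.natDegree := by
          rw [← hnd]
          exact natDegree_lt_natDegree hQ0 hdlt
        omega

theorem stmt14 (n k a : ℕ) (hk : 1 ≤ k) (hkn : k ≤ n) (ha : 1 ≤ a) (han : a ≤ n) :
    ∑ b ∈ Finset.Icc 1 n,
        (-1 : ℤ) ^ b * Nat.choose n b * Nat.choose (a * b - 1) (k - 1) = (-1 : ℤ) ^ k := by
  -- work in ℚ
  have hinj : Function.Injective ((↑) : ℤ → ℚ) := Int.cast_injective
  apply hinj
  push_cast
  -- the polynomial
  set P : ℚ[X] :=
    (descPochhammer ℚ (k - 1)).comp (C (a : ℚ) * X - 1) * C (1 / (Nat.factorial (k - 1) : ℚ)) with hP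
  set f : ℕ → ℚ := fun b => P.eval (b : ℚ) with hf
  have hfact : (Nat.factorial (k - 1) : ℚ) ≠ 0 := by positivity
  have hfeval : ∀ b : ℕ,
      f b = (descPochhammer ℚ (k - 1)).eval ((a : ℚ) * b - 1) / (Nat.factorial (k - 1) : ℚ) := by
    intro b
    simp [hf, hP, eval_comp, div_eq_mul_inv, one_div]
  -- value at 0
  have hf0 : f 0 = (-1 : ℚ) ^ (k - 1) := by
    rw [hfeval]
    have h0 : (a : ℚ) * (0 : ℕ) - 1 = -1 := by norm_num
    rw [h0, descPochhammer_eval_eq_ascPochhammer]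
    have h1 : (-1 : ℚ) - (k - 1 : ℕ) + 1 = -((k - 1 : ℕ) : ℚ) := by ring
    rw [h1, ascPochhammer_eval_neg_eq_descPochhammer,
      descPochhammer_eval_eq_descFactorial, Nat.descFactorial_self]
    field_simp
  -- values at b ≥ 1
  have hfb : ∀ b ∈ Finset.Icc 1 n, f b = ((a * b - 1).choose (k - 1) : ℚ) := by
    intro b hb
    simp only [Finset.mem_Icc] at hb
    have hab : 1 ≤ a * b := Nat.one_le_iff_ne_zero.mpr (Nat.mul_ne_zero (by omega) (by omega))
    have hcast : ((a * b - 1 : ℕ) : ℚ) = (a : ℚ) * b - 1 := by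
      push_cast [hab]; ring
    rw [hfeval, ← hcast, descPochhammer_eval_eq_descFactorial,
      Nat.descFactorial_eq_factorial_mul_choose]
    push_cast
    field_simp
  -- degree bound
  have hdeg : P.natDegree < n := by
    have h2 : (C (a : ℚ) * X - 1).natDegree ≤ 1 := by
      refine (natDegree_sub_le _ _).trans ?_
      refine max_le ((natDegree_C_mul_le _ _).trans (by simp)) (by simp)
    have h1 : P.natDegree ≤ (k - 1) * 1 := by
      calc P.natDegree ≤ ((descPochhammer ℚ (k - 1)).comp (C (a : ℚ) * X - 1)).natDegree := by
            rw [hP]; exact natDegree_mul_C_le _ _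
        _ ≤ (descPochhammer ℚ (k - 1)).natDegree * (C (a : ℚ) * X - 1).natDegree :=
            natDegree_comp_le
        _ ≤ (k - 1) * 1 := by
            rw [descPochhammer_natDegree]
            exact Nat.mul_le_mul_left _ h2
    omega
  -- the alternating sum of f over range (n+1) is 0
  have hsum0 : ∑ b ∈ Finset.range (n + 1), (-1 : ℚ) ^ b * (n.choose b) * f b = 0 := by
    have hiter := fwdDiff_iter_eq_sum_shift (1 : ℕ) f n 0
    rw [hf, fwdDiff_iter_poly n P hdeg] at hiter
    have heq : ∀ b ∈ Finset.range (n + 1),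
        (-1 : ℚ) ^ b * (n.choose b) * f b
          = (-1 : ℚ) ^ n * (((-1 : ℤ) ^ (n - b) * n.choose b) • f (0 + b • 1)) := by
      intro b hb
      simp only [Finset.mem_range] at hb
      have hb' : (0 + b • 1 : ℕ) = b := by simp
      have hpow : (-1 : ℚ) ^ n * (-1 : ℚ) ^ (n - b) = (-1 : ℚ) ^ b := by
        rw [← pow_add]
        have h2 : n + (n - b) = b + 2 * (n - b) := by omega
        rw [h2, pow_add, pow_mul]
        simp
      rw [hb', zsmul_eq_mul]
      push_cast
      linear_combination (-((n.choose b : ℚ) * f b)) * hpow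
    rw [Finset.sum_congr rfl heq, ← Finset.mul_sum, ← hiter]
    simp
  -- split off b = 0
  have hsplit : ∑ b ∈ Finset.range (n + 1), (-1 : ℚ) ^ b * (n.choose b) * f b
      = f 0 + ∑ b ∈ Finset.Icc 1 n, (-1 : ℚ) ^ b * (n.choose b) * f b := by
    have hins : Finset.range (n + 1) = insert 0 (Finset.Icc 1 n) := by
      ext x
      simp only [Finset.mem_range, Finset.mem_Icc, Finset.mem_insert]
      omega
    rw [hins, Finset.sum_insert (by simp)]
    simp
  have key : ∑ b ∈ Finset.Icc 1 n, (-1 : ℚ) ^ b * (n.choose b) * f b = -(-1 : ℚ) ^ (k - 1) := by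
    rw [hsplit, hf0] at hsum0
    linarith
  calc ∑ b ∈ Finset.Icc 1 n, (-1 : ℚ) ^ b * (n.choose b) * ((a * b - 1).choose (k - 1) : ℚ)
      = ∑ b ∈ Finset.Icc 1 n, (-1 : ℚ) ^ b * (n.choose b) * f b := by
        refine Finset.sum_congr rfl fun b hb => ?_
        rw [hfb b hb]
    _ = -(-1 : ℚ) ^ (k - 1) := key
    _ = (-1 : ℚ) ^ k := by
        have hkk : (-1 : ℚ) ^ k = (-1) ^ (k - 1) * (-1) := by
          rw [← pow_succ]; congr 1; omega
        rw [hkk]; ring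
end
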